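/- Σ_{p ∈ P_n} q^{n - tail(p)} = Σ_{k=0}^{n-1} ((n-k)/(n+k))·binom(n+k, k)·q^k, where tail(p) := 2n - max{i : p_i = +1, p_{i+1} = -1} is the number of consecutive down-steps at the end of the Dyck path p. -/

import Mathlib

open Finset

/-- A permutation is 321-avoiding if it has no decreasing subsequence of length 3. -/
def Avoids321 {n : ℕ} (π : Equiv.Perm (Fin n)) : Prop :=
  ¬ ∃ i j k : Fin n, i < j ∧ j < k ∧ π k < π j ∧ π j < π i

instance {n : ℕ} : DecidablePred (Avoids321 (n := n)) := fun π =>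
  decidable_of_iff (¬ ∃ i j k : Fin n, i < j ∧ j < k ∧ π k < π j ∧ π j < π i) Iff.rfl

/-- The set `T_n` of 321-avoiding permutations of order `n`. -/
def Tset (n : ℕ) : Finset (Equiv.Perm (Fin n)) :=
  Finset.univ.filter (fun π => Avoids321 π)

/-- The value `π(i)` in one-based notation: positions `1,…,n`, values `1,…,n`. -/
def pval {n : ℕ} (π : Equiv.Perm (Fin n)) (i : ℕ) : ℕ :=
  if h : i - 1 < n then (π ⟨i - 1, h⟩ : ℕ) + 1 else 0

/-- The descent set `Des(π) = {1 ≤ i ≤ n-1 : π(i) > π(i+1)}` (one-based). -/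
def desSet {n : ℕ} (π : Equiv.Perm (Fin n)) : Finset ℕ :=
  (Finset.Icc 1 (n - 1)).filter (fun i => pval π (i + 1) < pval π i)

/-- The last descent of `π` (0 for the identity). -/
def ldes {n : ℕ} (π : Equiv.Perm (Fin n)) : ℕ := (desSet π).sup id

/-- `lind(π) = π⁻¹(n)`, the (one-based) position of the letter `n` in `π`. -/
def lind {n : ℕ} (π : Equiv.Perm (Fin n)) : ℕ := pval π.symm n

/-- The inversion number of `π`. -/
def invNum {n : ℕ} (π : Equiv.Perm (Fin n)) : ℕ :=
  (Finset.univ.filter (fun q : Fin n × Fin n => q.1 < q.2 ∧ π q.2 < π q.1)).card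

/-- A ±1 sequence of length `2n` (`true` = +1) is a Dyck path if it has `n` up
steps and every prefix has at least as many up steps as down steps. -/
def IsDyckPred (n : ℕ) (p : Fin (2 * n) → Bool) : Prop :=
  (Finset.univ.filter (fun i => p i = true)).card = n ∧
  ∀ k ≤ 2 * n,
    k ≤ 2 * (Finset.univ.filter (fun i : Fin (2 * n) => (i : ℕ) < k ∧ p i = true)).card

instance (n : ℕ) : DecidablePred (IsDyckPred n) := fun p => by
  unfold IsDyckPred; infer_instance

/-- The set `P_n` of Dyck paths of length `2n`. -/
def DyckPath (n : ℕ) : Type := { p : Fin (2 * n) → Bool // IsDyckPred n p }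

instance (n : ℕ) : Fintype (DyckPath n) := by unfold DyckPath; infer_instance

/-- The `i`-th step of the path, one-based; `true` = +1, `false` = -1. -/
def pstep {n : ℕ} (p : DyckPath n) (i : ℕ) : Bool :=
  if h : i - 1 < 2 * n then p.1 ⟨i - 1, h⟩ else false

/-- `Des(p) = {1 ≤ i ≤ n-1 : p_i = +1, p_{i+1} = -1}`. -/
def pathDes {n : ℕ} (p : DyckPath n) : Finset ℕ :=
  (Finset.Icc 1 (n - 1)).filter (fun i => pstep p i = true ∧ pstep p (i + 1) = false)

/-- `Des(p⁻¹) = {1 ≤ i ≤ n-1 : p_{2n-i} = +1, p_{2n-i+1} = -1}`. -/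
def pathDesInv {n : ℕ} (p : DyckPath n) : Finset ℕ :=
  (Finset.Icc 1 (n - 1)).filter
    (fun i => pstep p (2 * n - i) = true ∧ pstep p (2 * n - i + 1) = false)

/-- `ldes(p) = max{1 ≤ i ≤ n-1 : p_i = +1, p_{i+1} = -1}` (0 if none). -/
def pathLdes {n : ℕ} (p : DyckPath n) : ℕ := (pathDes p).sup id

/-- `lind(p) = max{1 ≤ i ≤ n : p_i = +1, p_{i+1} = -1}` (0 if none). -/
def pathLind {n : ℕ} (p : DyckPath n) : ℕ :=
  ((Finset.Icc 1 n).filter (fun i => pstep p i = true ∧ pstep p (i + 1) = false)).sup id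

/-- `tail(p) = 2n - max{i : p_i = +1, p_{i+1} = -1}`, the number of consecutive
down steps at the end of `p`. -/
def pathTail {n : ℕ} (p : DyckPath n) : ℕ :=
  2 * n -
    ((Finset.Icc 1 (2 * n - 1)).filter
      (fun i => pstep p i = true ∧ pstep p (i + 1) = false)).sup id


def U {m : ℕ} (p : Fin m → Bool) (k : ℕ) : ℕ :=
  (Finset.univ.filter (fun i : Fin m => (i : ℕ) < k ∧ p i = true)).card

def T {m : ℕ} (p : Fin m → Bool) : ℕ :=
  (Finset.univ.filter (fun i : Fin m => p i = true)).card

lemma U_zero {m : ℕ} (p : Fin m → Bool) : U p 0 = 0 := by simp [U]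

lemma U_succ {m : ℕ} (p : Fin m → Bool) (k : ℕ) :
    U p (k + 1) = U p k + (if h : k < m then (if p ⟨k, h⟩ then 1 else 0) else 0) := by
  unfold U
  by_cases h : k < m
  · rw [dif_pos h]
    by_cases hp : p ⟨k, h⟩ = true
    · rw [if_pos hp]
      have hset : (Finset.univ.filter (fun i : Fin m => (i : ℕ) < k + 1 ∧ p i = true)) =
          (Finset.univ.filter (fun i : Fin m => (i : ℕ) < k ∧ p i = true)) ∪ {⟨k, h⟩} := by
        ext i
        simp only [Finset.mem_filter, Finset.mem_univ, true_and, Finset.mem_union,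
          Finset.mem_singleton]
        constructor
        · rintro ⟨hik, hpi⟩
          rcases Nat.lt_succ_iff_lt_or_eq.mp hik with h' | h'
          · exact Or.inl ⟨h', hpi⟩
          · exact Or.inr (Fin.ext h')
        · rintro (⟨hik, hpi⟩ | rfl)
          · exact ⟨Nat.lt_succ_of_lt hik, hpi⟩
          · exact ⟨Nat.lt_succ_self _, hp⟩
      rw [hset, Finset.card_union_of_disjoint]
      · simp
      · simp only [Finset.disjoint_singleton_right, Finset.mem_filter]
        rintro ⟨_, hik, _⟩
        simp at hik
    · rw [if_neg hp, add_zero]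
      congr 1
      ext i
      simp only [Finset.mem_filter, Finset.mem_univ, true_and]
      constructor
      · rintro ⟨hik, hpi⟩
        rcases Nat.lt_succ_iff_lt_or_eq.mp hik with h' | h'
        · exact ⟨h', hpi⟩
        · exfalso; apply hp; rw [← hpi]; congr 1; exact (Fin.ext h').symm
      · rintro ⟨hik, hpi⟩
        exact ⟨Nat.lt_succ_of_lt hik, hpi⟩
  · rw [dif_neg h, add_zero]
    congr 1
    ext i
    have : (i : ℕ) < k := lt_of_lt_of_le i.isLt (not_lt.mp h)
    simp [this, Nat.lt_succ_of_lt this, this.le]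

lemma U_eq_T {m : ℕ} (p : Fin m → Bool) {k : ℕ} (h : m ≤ k) : U p k = T p := by
  unfold U T
  congr 1
  ext i
  have : (i : ℕ) < k := lt_of_lt_of_le i.isLt h
  simp [this]

lemma U_le {m : ℕ} (p : Fin m → Bool) (k : ℕ) : U p k ≤ k := by
  induction k with
  | zero => simp [U_zero]
  | succ k ih =>
    rw [U_succ]
    split
    · split <;> omega
    · omega

lemma U_congr {m m' : ℕ} (p : Fin m → Bool) (p' : Fin m' → Bool) {j : ℕ}
    (hj : j ≤ m) (hj' : j ≤ m')
    (hagree : ∀ i (h : i < j), p ⟨i, lt_of_lt_of_le h hj⟩ = p' ⟨i, lt_of_lt_of_le h hj'⟩) :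
    ∀ k, k ≤ j → U p k = U p' k := by
  intro k
  induction k with
  | zero => simp [U_zero]
  | succ k ih =>
    intro hk
    rw [U_succ, U_succ, ih (by omega)]
    have hkm : k < m := by omega
    have hkm' : k < m' := by omega
    rw [dif_pos hkm, dif_pos hkm']
    rw [hagree k (by omega)]

lemma U_stab {m : ℕ} (p : Fin m → Bool) {j : ℕ}
    (hfalse : ∀ i (h : i < m), j ≤ i → p ⟨i, h⟩ = false) :
    ∀ k, j ≤ k → U p k = U p j := by
  intro k hk
  induction k with
  | zero => cases Nat.le_zero.mp hk; rfl
  | succ k ih =>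
    rcases Nat.lt_or_ge j (k+1) with h | h
    · have hjk : j ≤ k := by omega
      rw [U_succ, ih hjk]
      split
      · rename_i hkm
        rw [hfalse k hkm hjk]; simp
      · simp
    · have : j = k + 1 := by omega
      rw [this]
/-- nonnegative paths with `m` steps, `a` of which are up. -/
def NN (m a : ℕ) : Finset (Fin m → Bool) :=
  Finset.univ.filter (fun p => T p = a ∧ ∀ k ≤ m, k ≤ 2 * U p k)

lemma mem_NN {m a : ℕ} {p : Fin m → Bool} :
    p ∈ NN m a ↔ T p = a ∧ ∀ k ≤ m, k ≤ 2 * U p k := by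
  simp [NN]

lemma NN_eq_empty {m a : ℕ} (h : 2 * a < m) : NN m a = ∅ := by
  ext p
  simp only [mem_NN, Finset.notMem_empty, iff_false, not_and]
  intro hT hall
  have := hall m le_rfl
  rw [U_eq_T p le_rfl, hT] at this
  omega

lemma U_const_true (m : ℕ) (k : ℕ) (hk : k ≤ m) : U (fun _ : Fin m => true) k = k := by
  induction k with
  | zero => simp [U_zero]
  | succ k ih =>
    rw [U_succ, ih (by omega), dif_pos (by omega : k < m)]
    simp

lemma NN_self (a : ℕ) : NN a a = {fun _ : Fin a => true} := by
  ext p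
  simp only [mem_NN, Finset.mem_singleton]
  constructor
  · rintro ⟨hT, -⟩
    funext i
    have hsub : (Finset.univ.filter (fun i : Fin a => p i = true)) = Finset.univ := by
      apply Finset.eq_univ_of_card
      rw [Fintype.card_fin]
      exact hT
    have : i ∈ Finset.univ.filter (fun i : Fin a => p i = true) := by
      rw [hsub]; exact Finset.mem_univ i
    simpa using (Finset.mem_filter.mp this).2
  · rintro rfl
    refine ⟨?_, ?_⟩
    · rw [← U_eq_T _ le_rfl, U_const_true a a le_rfl]
    · intro k hk
      rw [U_const_true a k hk]
      omega

lemma T_snoc {m : ℕ} (w : Fin (m + 1) → Bool) :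
    T w = T (Fin.init w) + (if w (Fin.last m) then 1 else 0) := by
  have hU : U w m = U (Fin.init w) m := by
    apply U_congr w (Fin.init w) (by omega) le_rfl _ m le_rfl
    intro i h
    simp [Fin.init]
  rw [← U_eq_T w le_rfl, ← U_eq_T (Fin.init w) le_rfl]
  rw [U_succ, hU, dif_pos (Nat.lt_succ_self m)]
  rfl

lemma U_init {m : ℕ} (w : Fin (m + 1) → Bool) (k : ℕ) (hk : k ≤ m) :
    U w k = U (Fin.init w) k := by
  apply U_congr w (Fin.init w) (by omega) le_rfl _ k hk
  intro i h
  simp [Fin.init]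

lemma NN_rec {m a : ℕ} (h : m ≤ 2 * a + 1) :
    (NN (m + 1) (a + 1)).card = (NN m a).card + (NN m (a + 1)).card := by
  rw [← Finset.card_union_of_disjoint (by
    rw [Finset.disjoint_left]
    intro w hw hw'
    rw [mem_NN] at hw hw'
    omega)]
  refine Finset.card_bij' (fun w _ => Fin.init w)
    (fun w' _ => Fin.snoc w' (decide (T w' = a))) ?_ ?_ ?_ ?_
  · -- hi : init maps into union
    intro w hw
    rw [mem_NN] at hw
    obtain ⟨hT, hall⟩ := hw
    rw [Finset.mem_union, mem_NN, mem_NN]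
    have hTs := T_snoc w
    have hinner : ∀ k ≤ m, k ≤ 2 * U (Fin.init w) k := by
      intro k hk
      rw [← U_init w k hk]
      exact hall k (by omega)
    by_cases hl : w (Fin.last m) = true
    · left
      refine ⟨?_, hinner⟩
      show T (Fin.init w) = a
      rw [hl] at hTs; simp at hTs; omega
    · right
      refine ⟨?_, hinner⟩
      show T (Fin.init w) = a + 1
      simp only [Bool.not_eq_true] at hl
      rw [hl] at hTs; simp at hTs; omega
  · -- hj : snoc maps into NN (m+1) (a+1)
    intro w' hw'
    rw [Finset.mem_union, mem_NN, mem_NN] at hw'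
    rw [mem_NN]
    have hUsnoc : ∀ k ≤ m, U (Fin.snoc w' (decide (T w' = a)) : Fin (m+1) → Bool) k = U w' k := by
      intro k hk
      rw [U_init _ k hk, Fin.init_snoc]
    have hTsnoc : T (Fin.snoc w' (decide (T w' = a)) : Fin (m+1) → Bool)
        = T w' + (if T w' = a then 1 else 0) := by
      rw [T_snoc, Fin.init_snoc, Fin.snoc_last]
      by_cases hc : T w' = a <;> simp [hc]
    rcases hw' with ⟨hT, hall⟩ | ⟨hT, hall⟩
    · refine ⟨by rw [hTsnoc, hT]; simp, ?_⟩
      intro k hk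
      rcases Nat.lt_or_ge k (m + 1) with hkm | hkm
      · rw [hUsnoc k (by omega)]
        exact hall k (by omega)
      · have : k = m + 1 := by omega
        subst this
        rw [U_eq_T _ le_rfl, hTsnoc, hT]
        simp; omega
    · have hne : T w' ≠ a := by omega
      refine ⟨by rw [hTsnoc, if_neg hne, hT], ?_⟩
      intro k hk
      rcases Nat.lt_or_ge k (m + 1) with hkm | hkm
      · rw [hUsnoc k (by omega)]
        exact hall k (by omega)
      · have : k = m + 1 := by omega
        subst this
        rw [U_eq_T _ le_rfl, hTsnoc, if_neg hne, hT]
        omega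
  · -- left inverse
    intro w hw
    rw [mem_NN] at hw
    have hTs := T_snoc w
    have : decide (T (Fin.init w) = a) = w (Fin.last m) := by
      by_cases hl : w (Fin.last m) = true
      · rw [hl, decide_eq_true_eq]
        rw [hl] at hTs; simp at hTs; omega
      · simp only [Bool.not_eq_true] at hl
        rw [hl] at hTs; simp at hTs
        rw [hl, decide_eq_false_iff_not]
        omega
    show Fin.snoc (Fin.init w) (decide (T (Fin.init w) = a)) = w
    rw [this, Fin.snoc_init_self]
  · -- right inverse
    intro w' hw'
    exact Fin.init_snoc _ _
theorem NN_card_formula : ∀ m a : ℕ, a ≤ m → m ≤ 2 * a + 1 →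
    ((NN m a).card : ℚ) = (m.choose (m - a) : ℚ) - (m.choose (a + 1) : ℚ) := by
  intro m
  induction m with
  | zero =>
    intro a ha _
    interval_cases a
    rw [NN_self]
    simp
  | succ m ih =>
    intro a ha hle
    rcases Nat.lt_or_ge m a with hma | hma
    · -- a = m + 1
      have : a = m + 1 := by omega
      subst this
      rw [NN_self]
      simp [Nat.choose_eq_zero_of_lt (by omega : m + 1 < m + 1 + 1)]
    · -- a ≤ m
      rcases Nat.lt_or_ge (2 * a) (m + 1) with h2 | h2
      · have hm : m = 2 * a := by omega
        rw [NN_eq_empty (by omega)]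
        have : m + 1 - a = a + 1 := by omega
        rw [this]
        simp
      · have ha1 : 1 ≤ a := by omega
        obtain ⟨a', rfl⟩ : ∃ a', a = a' + 1 := ⟨a - 1, by omega⟩
        rw [NN_rec (by omega)]
        push_cast
        rw [ih a' (by omega) (by omega), ih (a' + 1) (by omega) (by omega)]
        have e2 : m - a' = (m - (a' + 1)) + 1 := by omega
        rw [e2, Nat.choose_succ_succ' m (m - (a' + 1)), Nat.choose_succ_succ' m (a' + 1)]
        push_cast
        ring
set_option linter.unnecessarySimpa false
section Dyck

variable {n : ℕ}

def peaks (p : DyckPath n) : Finset ℕ :=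
  (Finset.Icc 1 (2 * n - 1)).filter
    (fun i => pstep p i = true ∧ pstep p (i + 1) = false)

lemma pathTail_eq (p : DyckPath n) : pathTail p = 2 * n - (peaks p).sup id := rfl

lemma pstep_pos (p : DyckPath n) (i : ℕ) (h : i - 1 < 2 * n) :
    pstep p i = p.1 ⟨i - 1, h⟩ := dif_pos h

lemma pstep_neg (p : DyckPath n) (i : ℕ) (h : ¬ (i - 1 < 2 * n)) :
    pstep p i = false := dif_neg h

lemma dyck_T (p : DyckPath n) : T p.1 = n := p.2.1

lemma dyck_U (p : DyckPath n) : ∀ k ≤ 2 * n, k ≤ 2 * U p.1 k := p.2.2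

lemma dyck_last_false (p : DyckPath n) (hn : 1 ≤ n) :
    p.1 ⟨2 * n - 1, by omega⟩ = false := by
  by_contra htrue
  simp only [Bool.not_eq_false] at htrue
  have h1 : U p.1 (2 * n) = n := by rw [U_eq_T _ le_rfl, dyck_T]
  have h2 : U p.1 ((2 * n - 1) + 1) = U p.1 (2 * n - 1) +
      (if h : 2 * n - 1 < 2 * n then (if p.1 ⟨2 * n - 1, h⟩ then 1 else 0) else 0) :=
    U_succ _ _
  rw [dif_pos (by omega : 2 * n - 1 < 2 * n), if_pos htrue] at h2
  rw [show (2 * n - 1) + 1 = 2 * n by omega, h1] at h2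
  have h3 := dyck_U p (2 * n - 1) (by omega)
  omega

lemma exists_peak_ge (p : DyckPath n) (hn : 1 ≤ n) (i : ℕ) (h1 : 1 ≤ i) (h2 : i ≤ 2 * n)
    (ht : pstep p i = true) : ∃ j ∈ peaks p, i ≤ j := by
  set S := (Finset.Icc i (2 * n)).filter (fun j => pstep p j = true) with hS
  have hiS : i ∈ S := by
    rw [hS, Finset.mem_filter, Finset.mem_Icc]
    exact ⟨⟨le_rfl, h2⟩, ht⟩
  have hne : S.Nonempty := ⟨i, hiS⟩
  set j := S.max' hne with hj
  have hjS : j ∈ S := S.max'_mem hne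
  rw [hS, Finset.mem_filter, Finset.mem_Icc] at hjS
  obtain ⟨⟨hij, hj2n⟩, hjt⟩ := hjS
  have hjne : j ≠ 2 * n := by
    intro heq
    rw [heq, pstep_pos p (2 * n) (by omega), dyck_last_false p hn] at hjt
    exact Bool.false_ne_true hjt
  have hjlt : j ≤ 2 * n - 1 := by omega
  have hnext : pstep p (j + 1) = false := by
    by_contra hf
    simp only [Bool.not_eq_false] at hf
    have : j + 1 ∈ S := by
      rw [hS, Finset.mem_filter, Finset.mem_Icc]
      exact ⟨⟨by omega, by omega⟩, hf⟩
    have := S.le_max' _ this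
    omega
  refine ⟨j, ?_, hij⟩
  rw [peaks, Finset.mem_filter, Finset.mem_Icc]
  exact ⟨⟨by omega, hjlt⟩, hjt, hnext⟩

lemma peaks_nonempty (p : DyckPath n) (hn : 1 ≤ n) : (peaks p).Nonempty := by
  have hT := dyck_T p
  have hpos : 0 < (Finset.univ.filter (fun i : Fin (2 * n) => p.1 i = true)).card := by
    show 0 < T p.1
    omega
  obtain ⟨i0, hi0⟩ := Finset.card_pos.mp hpos
  rw [Finset.mem_filter] at hi0
  have ht : pstep p ((i0 : ℕ) + 1) = true := by
    rw [pstep_pos p _ (by simpa using i0.isLt)]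
    simpa using hi0.2
  obtain ⟨j, hj, _⟩ := exists_peak_ge p hn ((i0 : ℕ) + 1) (by omega) (by have := i0.isLt; omega) ht
  exact ⟨j, hj⟩

lemma L_spec (p : DyckPath n) (hn : 1 ≤ n) :
    (peaks p).sup id ∈ peaks p := by
  obtain ⟨b, hb, heq⟩ := Finset.exists_mem_eq_sup (peaks p) (peaks_nonempty p hn) id
  rw [heq]; exact hb

lemma L_le (p : DyckPath n) : (peaks p).sup id ≤ 2 * n - 1 := by
  apply Finset.sup_le
  intro i hi
  rw [peaks, Finset.mem_filter, Finset.mem_Icc] at hi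
  exact hi.1.2

lemma after_L_false (p : DyckPath n) (hn : 1 ≤ n) (i : ℕ) (hi : (peaks p).sup id < i) :
    pstep p i = false := by
  rcases Nat.lt_or_ge (2 * n) i with h | h
  · exact pstep_neg p i (by omega)
  · by_contra hf
    simp only [Bool.not_eq_false] at hf
    obtain ⟨j, hj, hij⟩ := exists_peak_ge p hn i (by omega) h hf
    have := Finset.le_sup (f := id) hj
    simp only [id] at this
    omega

lemma U_at_L (p : DyckPath n) (hn : 1 ≤ n) : U p.1 ((peaks p).sup id) = n := by
  have hstab : ∀ k, (peaks p).sup id ≤ k → U p.1 k = U p.1 ((peaks p).sup id) := by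
    apply U_stab
    intro i h hLi
    have : pstep p (i + 1) = false := after_L_false p hn (i + 1) (by omega)
    rw [pstep_pos p (i + 1) (by simpa using h)] at this
    simpa using this
  have := hstab (2 * n) (by have := L_le p; omega)
  rw [U_eq_T _ le_rfl, dyck_T] at this
  omega

lemma L_ge (p : DyckPath n) (hn : 1 ≤ n) : n ≤ (peaks p).sup id := by
  have := U_at_L p hn
  have := U_le p.1 ((peaks p).sup id)
  omega

lemma kstat_eq (p : DyckPath n) (hn : 1 ≤ n) :
    n - pathTail p = (peaks p).sup id - n := by
  have h1 := L_ge p hn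
  have h2 := L_le p
  rw [pathTail_eq]
  omega

lemma kstat_lt (p : DyckPath n) (hn : 1 ≤ n) : n - pathTail p < n := by
  rw [kstat_eq p hn]
  have := L_le p
  omega

end Dyck
section Bij

variable {n k : ℕ}

def Epath (n k : ℕ) (w : Fin (n - 1 + k) → Bool) : Fin (2 * n) → Bool := fun i =>
  if h : (i : ℕ) < n - 1 + k then w ⟨(i : ℕ), h⟩ else decide ((i : ℕ) = n - 1 + k)

lemma U_Epath_low (hn : 1 ≤ n) (hk : k < n) (w : Fin (n - 1 + k) → Bool) :
    ∀ k' ≤ n - 1 + k, U (Epath n k w) k' = U w k' := by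
  apply U_congr _ _ (by omega) le_rfl
  intro i h
  show Epath n k w _ = _
  unfold Epath
  rw [dif_pos h]

lemma Epath_peak (hn : 1 ≤ n) (hk : k < n) (w : Fin (n - 1 + k) → Bool)
    (h : n - 1 + k < 2 * n) : Epath n k w ⟨n - 1 + k, h⟩ = true := by
  unfold Epath
  rw [dif_neg (by simp)]
  simp

lemma Epath_after (hn : 1 ≤ n) (hk : k < n) (w : Fin (n - 1 + k) → Bool)
    (i : ℕ) (h : i < 2 * n) (hgt : n - 1 + k < i) : Epath n k w ⟨i, h⟩ = false := by
  unfold Epath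
  rw [dif_neg (by simp; omega)]
  rw [decide_eq_false (by simp; omega)]

lemma U_Epath_high (hn : 1 ≤ n) (hk : k < n) (w : Fin (n - 1 + k) → Bool)
    (hT : T w = n - 1) :
    ∀ k', n - 1 + k + 1 ≤ k' → U (Epath n k w) k' = n := by
  intro k' hk'
  have hstab := U_stab (Epath n k w) (j := n - 1 + k + 1)
    (fun i h hle => Epath_after hn hk w i h (by omega)) k' hk'
  rw [hstab, U_succ]
  rw [dif_pos (by omega : n - 1 + k < 2 * n)]
  rw [U_Epath_low hn hk w _ le_rfl, U_eq_T w le_rfl, hT, Epath_peak hn hk w]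
  simp
  omega

lemma Epath_isDyck (hn : 1 ≤ n) (hk : k < n) (w : Fin (n - 1 + k) → Bool)
    (hw : w ∈ NN (n - 1 + k) (n - 1)) : IsDyckPred n (Epath n k w) := by
  rw [mem_NN] at hw
  obtain ⟨hT, hall⟩ := hw
  constructor
  · show T (Epath n k w) = n
    rw [← U_eq_T (Epath n k w) (le_refl (2 * n))]
    exact U_Epath_high hn hk w hT (2 * n) (by omega)
  · intro k' hk'
    show k' ≤ 2 * U (Epath n k w) k'
    rcases le_or_gt k' (n - 1 + k) with h | h
    · rw [U_Epath_low hn hk w k' h]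
      exact hall k' h
    · rw [U_Epath_high hn hk w hT k' (by omega)]
      omega

lemma Epath_kstat (hn : 1 ≤ n) (hk : k < n) (w : Fin (n - 1 + k) → Bool)
    (hp : IsDyckPred n (Epath n k w)) :
    n - pathTail (⟨Epath n k w, hp⟩ : DyckPath n) = k := by
  set q : DyckPath n := ⟨Epath n k w, hp⟩ with hq
  have hL : (peaks q).sup id = n + k := by
    apply le_antisymm
    · apply Finset.sup_le
      intro i hi
      simp only [id_eq]
      rw [peaks, Finset.mem_filter, Finset.mem_Icc] at hi
      obtain ⟨⟨h1, h2⟩, ht, -⟩ := hi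
      by_contra hgt
      push_neg at hgt
      rw [pstep_pos q i (by omega)] at ht
      have : q.1 ⟨i - 1, by omega⟩ = false :=
        Epath_after hn hk w (i - 1) (by omega) (by omega)
      rw [this] at ht
      exact Bool.false_ne_true ht
    · have hmem : n + k ∈ peaks q := by
        rw [peaks, Finset.mem_filter, Finset.mem_Icc]
        refine ⟨⟨by omega, by omega⟩, ?_, ?_⟩
        · rw [pstep_pos q (n + k) (by omega)]
          have : (⟨n + k - 1, by omega⟩ : Fin (2 * n)) = ⟨n - 1 + k, by omega⟩ :=
            Fin.ext (show n + k - 1 = n - 1 + k by omega)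
          rw [this]
          exact Epath_peak hn hk w _
        · rw [pstep_pos q (n + k + 1) (by omega)]
          exact Epath_after hn hk w (n + k + 1 - 1) (by omega) (by omega)
      exact Finset.le_sup (f := id) hmem
  rw [kstat_eq q hn, hL]
  omega

lemma restrict_mem (hn : 1 ≤ n) (hk : k < n) (p : DyckPath n)
    (hp : n - pathTail p = k) :
    (fun j : Fin (n - 1 + k) => p.1 ⟨(j : ℕ), by omega⟩) ∈ NN (n - 1 + k) (n - 1) := by
  have hL : (peaks p).sup id = n + k := by
    have h1 := kstat_eq p hn
    have h2 := L_ge p hn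
    have h3 := L_le p
    omega
  have hUlow : ∀ k' ≤ n - 1 + k,
      U (fun j : Fin (n - 1 + k) => p.1 ⟨(j : ℕ), by omega⟩) k' = U p.1 k' := by
    intro k' h
    exact (U_congr p.1 (fun j : Fin (n - 1 + k) => p.1 ⟨(j : ℕ), by omega⟩)
      (by omega) le_rfl (fun i h => rfl) k' h).symm
  rw [mem_NN]
  constructor
  · show T _ = n - 1
    have h1 : U p.1 (n + k) = n := by
      have := U_at_L p hn
      rwa [hL] at this
    have h' : n - 1 + k < 2 * n := by omega
    have hpk : p.1 ⟨n - 1 + k, h'⟩ = true := by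
      have hspec := L_spec p hn
      rw [hL, peaks, Finset.mem_filter] at hspec
      have ht := hspec.2.1
      rw [pstep_pos p (n + k) (by omega)] at ht
      have : (⟨n + k - 1, by omega⟩ : Fin (2 * n)) = ⟨n - 1 + k, h'⟩ :=
        Fin.ext (show n + k - 1 = n - 1 + k by omega)
      rwa [this] at ht
    have h2 := U_succ p.1 (n - 1 + k)
    rw [dif_pos h', hpk] at h2
    simp only [if_pos] at h2
    rw [show n - 1 + k + 1 = n + k by omega, h1] at h2
    rw [← U_eq_T _ le_rfl, hUlow _ le_rfl]
    omega
  · intro k' h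
    rw [hUlow k' h]
    exact dyck_U p k' (by omega)

lemma fiber_card (hn : 1 ≤ n) (hk : k < n) :
    (Finset.univ.filter (fun p : DyckPath n => n - pathTail p = k)).card
      = (NN (n - 1 + k) (n - 1)).card := by
  refine Finset.card_bij'
    (fun p _ => (fun j : Fin (n - 1 + k) => p.1 ⟨(j : ℕ), by omega⟩))
    (fun w hw => (⟨Epath n k w, Epath_isDyck hn hk w hw⟩ : DyckPath n))
    ?_ ?_ ?_ ?_
  · intro p hp
    rw [Finset.mem_filter] at hp
    exact restrict_mem hn hk p hp.2
  · intro w hw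
    apply Finset.mem_filter.mpr
    exact ⟨Finset.mem_univ _, Epath_kstat hn hk w _⟩
  · intro p hp
    rw [Finset.mem_filter] at hp
    have hL : (peaks p).sup id = n + k := by
      have h1 := kstat_eq p hn
      have h2 := L_ge p hn
      have h3 := L_le p
      omega
    apply Subtype.ext
    funext i
    show Epath n k (fun j : Fin (n - 1 + k) => p.1 ⟨(j : ℕ), by omega⟩) i = p.1 i
    rcases Nat.lt_trichotomy (i : ℕ) (n - 1 + k) with h | h | h
    · unfold Epath
      rw [dif_pos h]
    · unfold Epath
      rw [dif_neg (by omega)]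
      rw [decide_eq_true (by omega : (i : ℕ) = n - 1 + k)]
      have hspec := L_spec p hn
      rw [hL, peaks, Finset.mem_filter] at hspec
      have ht := hspec.2.1
      rw [pstep_pos p (n + k) (by omega)] at ht
      have : (⟨n + k - 1, by omega⟩ : Fin (2 * n)) = i :=
        Fin.ext (show n + k - 1 = (i : ℕ) by omega)
      rw [this] at ht
      exact ht.symm
    · unfold Epath
      rw [dif_neg (by omega)]
      rw [decide_eq_false (by omega : ¬ ((i : ℕ) = n - 1 + k))]
      have : pstep p ((i : ℕ) + 1) = false := by
        apply after_L_false p hn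
        rw [hL]
        omega
      rw [pstep_pos p ((i : ℕ) + 1) (by simpa using i.isLt)] at this
      have heq : (⟨(i : ℕ) + 1 - 1, by simpa using i.isLt⟩ : Fin (2 * n)) = i :=
        Fin.ext (show (i : ℕ) + 1 - 1 = (i : ℕ) by omega)
      rw [heq] at this
      exact this.symm
  · intro w hw
    funext j
    show Epath n k w ⟨(j : ℕ), by omega⟩ = w j
    unfold Epath
    rw [dif_pos j.isLt]

end Bij
lemma coeff_eq (n k : ℕ) (hn : 1 ≤ n) (hk : k < n) :
    (((n - 1 + k).choose k : ℚ)) - ((n - 1 + k).choose n : ℚ)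
      = (((n : ℚ) - k) / ((n : ℚ) + k)) * ((n + k).choose k : ℚ) := by
  have hden : ((n : ℚ) + k) ≠ 0 := by
    have : (0 : ℚ) < (n : ℚ) + (k : ℚ) := by
      have h1 : (1 : ℚ) ≤ (n : ℚ) := by exact_mod_cast hn
      have h2 : (0 : ℚ) ≤ (k : ℚ) := by positivity
      linarith
    exact ne_of_gt this
  rcases Nat.eq_zero_or_pos k with rfl | hk1
  · simp [Nat.choose_eq_zero_of_lt (show n - 1 < n by omega)]
    field_simp
  · -- k ≥ 1
    have h1 : (n - 1 + k).choose n = (n - 1 + k).choose (k - 1) := by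
      have := Nat.choose_symm (show k - 1 ≤ n - 1 + k by omega)
      rwa [show n - 1 + k - (k - 1) = n by omega] at this
    have h2 : (n + k).choose k = (n - 1 + k).choose (k - 1) + (n - 1 + k).choose k := by
      have := Nat.choose_succ_succ (n - 1 + k) (k - 1)
      simp only [Nat.succ_eq_add_one] at this
      rwa [show n - 1 + k + 1 = n + k by omega, show k - 1 + 1 = k by omega] at this
    have h3 : (n - 1 + k).choose k * k = (n - 1 + k).choose (k - 1) * n := by
      have := Nat.choose_succ_right_eq (n - 1 + k) (k - 1)
      rwa [show k - 1 + 1 = k by omega, show n - 1 + k - (k - 1) = n by omega] at this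
    rw [h1, h2]
    have h3q : ((n - 1 + k).choose k : ℚ) * k = ((n - 1 + k).choose (k - 1) : ℚ) * n := by
      exact_mod_cast h3
    push_cast
    field_simp
    ring_nf
    linear_combination (2 : ℚ) * h3q
theorem tail_gf_formula (n : ℕ) (hn : 1 ≤ n) (q : ℚ) :
    ∑ p : DyckPath n, q ^ (n - pathTail p) =
      ∑ k ∈ Finset.range n,
        (((n : ℚ) - k) / ((n : ℚ) + k)) * ((n + k).choose k) * q ^ k := by
  classical
  rw [← Finset.sum_fiberwise_of_maps_to
    (fun p _ => Finset.mem_range.mpr (kstat_lt p hn))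
    (fun p => q ^ (n - pathTail p))]
  apply Finset.sum_congr rfl
  intro k hk
  rw [Finset.mem_range] at hk
  have hinner : ∑ p ∈ Finset.univ.filter (fun p : DyckPath n => n - pathTail p = k),
      q ^ (n - pathTail p)
      = ∑ p ∈ Finset.univ.filter (fun p : DyckPath n => n - pathTail p = k), q ^ k := by
    apply Finset.sum_congr rfl
    intro p hp
    rw [(Finset.mem_filter.mp hp).2]
  rw [hinner, Finset.sum_const, fiber_card hn hk, nsmul_eq_mul]
  have hform := NN_card_formula (n - 1 + k) (n - 1) (by omega) (by omega)
  rw [show n - 1 + k - (n - 1) = k by omega, show n - 1 + 1 = n by omega] at hform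
  rw [hform, coeff_eq n k hn hk]
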